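/- Let F be the following set of 13 four-element subsets of {1,...,7}: {2,4,6,7}, {2,3,6,7}, {1,3,6,7}, {1,4,6,7}, {2,4,5,6}, {2,3,5,6}, {1,3,5,6}, {1,4,5,6}, {1,2,4,7}, {1,2,3,7}, {1,3,4,5}, {2,3,4,5}, {1,2,3,4} (the facets of the triangulation P^7_4 of the 3-sphere). Then the group of permutations σ of {1,...,7} such that σ maps every member of F to a member of F is isomorphic to the dihedral group of order 8. -/

import Mathlib

set_option maxRecDepth 100000
set_option maxHeartbeats 10000000
set_option synthInstance.maxHeartbeats 2000000
set_option synthInstance.maxSize 5000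

def Rp : Equiv.Perm (Fin 7) :=
  ⟨![2,3,1,0,6,5,4], ![3,2,0,1,6,5,4], by decide, by decide⟩

def Sp : Equiv.Perm (Fin 7) := Equiv.swap 0 1

def phi : DihedralGroup 4 → Equiv.Perm (Fin 7)
  | DihedralGroup.r i => Rp ^ i.val
  | DihedralGroup.sr i => Sp * Rp ^ i.val

def Flist : Finset (Finset (Fin 7)) :=
  {({1, 3, 5, 6} : Finset (Fin 7)), {1, 2, 5, 6}, {0, 2, 5, 6},
      {0, 3, 5, 6}, {1, 3, 4, 5}, {1, 2, 4, 5}, {0, 2, 4, 5}, {0, 3, 4, 5},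
      {0, 1, 3, 6}, {0, 1, 2, 6}, {0, 2, 3, 4}, {1, 2, 3, 4}, {0, 1, 2, 3}}

theorem phi_mul : ∀ x y : DihedralGroup 4, phi (x * y) = phi x * phi y := by decide

theorem phi_inj : Function.Injective phi := by decide

theorem phi_mem : ∀ x : DihedralGroup 4, ∀ s ∈ Flist, s.image (phi x) ∈ Flist := by decide

theorem key : ∀ a0 : Fin 7,
    ∀ a1 : Fin 7, a0 ≠ a1 →
    ∀ a2 : Fin 7, a0 ≠ a2 → a1 ≠ a2 →
    ∀ a3 : Fin 7, a0 ≠ a3 → a1 ≠ a3 → a2 ≠ a3 →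
    ({a0, a1, a2, a3} : Finset (Fin 7)) ∈ Flist →
    ∀ a4 : Fin 7, a0 ≠ a4 → a1 ≠ a4 → a2 ≠ a4 → a3 ≠ a4 →
    ({a0, a2, a3, a4} : Finset (Fin 7)) ∈ Flist →
    ({a1, a2, a3, a4} : Finset (Fin 7)) ∈ Flist →
    ∀ a5 : Fin 7, a0 ≠ a5 → a1 ≠ a5 → a2 ≠ a5 → a3 ≠ a5 → a4 ≠ a5 →
    ({a1, a3, a4, a5} : Finset (Fin 7)) ∈ Flist →
    ({a1, a2, a4, a5} : Finset (Fin 7)) ∈ Flist →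
    ({a0, a2, a4, a5} : Finset (Fin 7)) ∈ Flist →
    ({a0, a3, a4, a5} : Finset (Fin 7)) ∈ Flist →
    ∀ a6 : Fin 7, a0 ≠ a6 → a1 ≠ a6 → a2 ≠ a6 → a3 ≠ a6 → a4 ≠ a6 → a5 ≠ a6 →
    ({a1, a3, a5, a6} : Finset (Fin 7)) ∈ Flist →
    ({a1, a2, a5, a6} : Finset (Fin 7)) ∈ Flist →
    ({a0, a2, a5, a6} : Finset (Fin 7)) ∈ Flist →
    ({a0, a3, a5, a6} : Finset (Fin 7)) ∈ Flist →
    ({a0, a1, a3, a6} : Finset (Fin 7)) ∈ Flist →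
    ({a0, a1, a2, a6} : Finset (Fin 7)) ∈ Flist →
    ∃ x : DihedralGroup 4, ∀ i : Fin 7, phi x i = ![a0,a1,a2,a3,a4,a5,a6] i := by
  decide

/-- The facets of the triangulation `P⁷₄` of the 3-sphere on the seven
vertices `{1,…,7}` (here encoded as `Fin 7`, vertex `i` corresponding to `i−1`) are
`2467, 2367, 1367, 1467, 2456, 2356, 1356, 1456, 1247, 1237, 1345, 2345, 1234`. The group
of permutations of the vertices mapping every facet to a facet is isomorphic to the
dihedral group of order 8. -/
theorem automorphism_group_P74 (F : Finset (Finset (Fin 7)))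
    (hF : F = {({1, 3, 5, 6} : Finset (Fin 7)), {1, 2, 5, 6}, {0, 2, 5, 6},
      {0, 3, 5, 6}, {1, 3, 4, 5}, {1, 2, 4, 5}, {0, 2, 4, 5}, {0, 3, 4, 5},
      {0, 1, 3, 6}, {0, 1, 2, 6}, {0, 2, 3, 4}, {1, 2, 3, 4}, {0, 1, 2, 3}})
    (H : Subgroup (Equiv.Perm (Fin 7)))
    (hH : ∀ σ : Equiv.Perm (Fin 7), σ ∈ H ↔ ∀ s ∈ F, s.image σ ∈ F) :
    Nonempty (H ≃* DihedralGroup 4) := by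
  have hFl : F = Flist := hF
  subst hFl
  set φ : DihedralGroup 4 →* Equiv.Perm (Fin 7) := MonoidHom.mk' phi phi_mul with hφ
  have hinj : Function.Injective φ := phi_inj
  have hrange : φ.range = H := by
    ext σ
    rw [hH]
    constructor
    · rintro ⟨x, rfl⟩ s hs
      exact phi_mem x s hs
    · intro h
      have img : ∀ a b c d : Fin 7, ({a,b,c,d} : Finset (Fin 7)) ∈ Flist →
          ({σ a, σ b, σ c, σ d} : Finset (Fin 7)) ∈ Flist := by
        intro a b c d hm
        have := h {a,b,c,d} hm
        simpa [Finset.image_insert] using this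
      have ne : ∀ i j : Fin 7, i ≠ j → σ i ≠ σ j := fun i j hij => σ.injective.ne hij
      obtain ⟨x, hx⟩ := key (σ 0) (σ 1) (ne 0 1 (by decide)) (σ 2) (ne 0 2 (by decide))
        (ne 1 2 (by decide)) (σ 3) (ne 0 3 (by decide)) (ne 1 3 (by decide))
        (ne 2 3 (by decide)) (img 0 1 2 3 (by decide)) (σ 4) (ne 0 4 (by decide))
        (ne 1 4 (by decide)) (ne 2 4 (by decide)) (ne 3 4 (by decide))
        (img 0 2 3 4 (by decide)) (img 1 2 3 4 (by decide)) (σ 5) (ne 0 5 (by decide))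
        (ne 1 5 (by decide)) (ne 2 5 (by decide)) (ne 3 5 (by decide)) (ne 4 5 (by decide))
        (img 1 3 4 5 (by decide)) (img 1 2 4 5 (by decide)) (img 0 2 4 5 (by decide))
        (img 0 3 4 5 (by decide)) (σ 6) (ne 0 6 (by decide)) (ne 1 6 (by decide))
        (ne 2 6 (by decide)) (ne 3 6 (by decide)) (ne 4 6 (by decide)) (ne 5 6 (by decide))
        (img 1 3 5 6 (by decide)) (img 1 2 5 6 (by decide)) (img 0 2 5 6 (by decide))
        (img 0 3 5 6 (by decide)) (img 0 1 3 6 (by decide)) (img 0 1 2 6 (by decide))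
      refine ⟨x, Equiv.ext fun i => ?_⟩
      have hvec : ∀ i : Fin 7, ![σ 0, σ 1, σ 2, σ 3, σ 4, σ 5, σ 6] i = σ i := by
        intro i; fin_cases i <;> rfl
      exact (hx i).trans (hvec i)
  exact ⟨(MulEquiv.subgroupCongr hrange.symm).trans (MonoidHom.ofInjective hinj).symm⟩
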